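/- arXiv:2201.05534 — 2 statements merged into one kernel-verified Lean document; each statement's English description precedes it below -/
import Mathlib

section
/- For positive semidefinite matrices P and Q on a finite-dimensional complex inner product space and α ∈ [0,1], tr((P+Q)^α) ≤ tr(P^α) + tr(Q^α). -/
open Matrix MeasureTheory
open scoped Kronecker ComplexOrder

noncomputable def mpow {n : Type*} [Fintype n] [DecidableEq n]
    (A : Matrix n n ℂ) (p : ℝ) : Matrix n n ℂ :=
  if hA : A.IsHermitian then
    (hA.eigenvectorUnitary : Matrix n n ℂ) *
      Matrix.diagonal (fun i => ((hA.eigenvalues i ^ p : ℝ) : ℂ)) *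
      (star (hA.eigenvectorUnitary : Matrix n n ℂ))
  else 0

noncomputable def traceNorm {n : Type*} [Fintype n] [DecidableEq n]
    (A : Matrix n n ℂ) : ℝ :=
  (mpow (Aᴴ * A) (1/2)).trace.re

def IsDensity {n : Type*} [Fintype n] [DecidableEq n] (ρ : Matrix n n ℂ) : Prop :=
  ρ.PosSemidef ∧ ρ.trace = 1

noncomputable def sandTr {a b : Type*} [Fintype a] [DecidableEq a] [Fintype b] [DecidableEq b]
    (α : ℝ) (ρ : Matrix (a × b) (a × b) ℂ) (η : Matrix b b ℂ) : ℝ :=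
  (mpow (((1 : Matrix a a ℂ) ⊗ₖ mpow η ((1 - α)/(2*α))) * ρ *
      ((1 : Matrix a a ℂ) ⊗ₖ mpow η ((1 - α)/(2*α)))) α).trace.re

noncomputable def Hcond {a b : Type*} [Fintype a] [DecidableEq a] [Fintype b] [DecidableEq b]
    (α : ℝ) (ρ : Matrix (a × b) (a × b) ℂ) : ℝ :=
  ⨆ η : {η : Matrix b b ℂ // IsDensity η}, (1/(1-α)) * Real.logb 2 (sandTr α ρ η)

section McCarthyAux

open Polynomial Finset

variable {m : Type*} [Fintype m] [DecidableEq m]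

private lemma jensen_rpow {ι : Type*} [Fintype ι] (w x : ι → ℝ)
    (hw : ∀ i, 0 ≤ w i) (hw1 : ∑ i, w i = 1) (hx : ∀ i, 0 ≤ x i)
    {α : ℝ} (h0 : 0 < α) (h1 : α ≤ 1) :
    ∑ i, w i * x i ^ α ≤ (∑ i, w i * x i) ^ α := by
  have hp : (1:ℝ) ≤ 1 / α := by
    rw [le_div_iff₀ h0]; linarith
  have key := Real.arith_mean_le_rpow_mean Finset.univ w (fun i => x i ^ α)
    (fun i _ => hw i) hw1 (fun i _ => Real.rpow_nonneg (hx i) α) hp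
  have e1 : ∀ i : ι, (x i ^ α) ^ ((1:ℝ)/α) = x i := by
    intro i
    rw [← Real.rpow_mul (hx i), mul_one_div, div_self h0.ne', Real.rpow_one]
  simp only [e1, one_div_one_div] at key
  exact key

private lemma mpow_trace_re {A : Matrix m m ℂ} (hA : A.IsHermitian) (p : ℝ) :
    (mpow A p).trace.re = ∑ i, hA.eigenvalues i ^ p := by
  rw [mpow, dif_pos hA, Matrix.trace_mul_cycle,
    (Matrix.mem_unitaryGroup_iff').mp (hA.eigenvectorUnitary).2, Matrix.one_mul,
    Matrix.trace_diagonal, Complex.re_sum]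
  simp

private lemma charpoly_conj (E E' A : Matrix m m ℂ) (h : E * E' = 1) :
    (E' * A * E).charpoly = A.charpoly := by
  have h' : E' * E = 1 := mul_eq_one_comm.mp h
  have hC1 : ((1 : Matrix m m ℂ)).map (C : ℂ →+* ℂ[X]) = 1 :=
    Matrix.map_one _ (map_zero _) (map_one _)
  have key : charmatrix (E' * A * E) =
      E'.map (C : ℂ →+* ℂ[X]) * charmatrix A * E.map (C : ℂ →+* ℂ[X]) := by
    rw [charmatrix, charmatrix, Matrix.mul_sub, Matrix.sub_mul]
    congr 1
    · symm
      have comm := (Matrix.scalar_commute (X : ℂ[X]) (fun r' => Commute.all _ _)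
        (E'.map (C : ℂ →+* ℂ[X]))).eq
      calc E'.map (C : ℂ →+* ℂ[X]) * Matrix.scalar m (X : ℂ[X]) * E.map (C : ℂ →+* ℂ[X])
          = Matrix.scalar m (X : ℂ[X]) * (E'.map (C : ℂ →+* ℂ[X]) * E.map (C : ℂ →+* ℂ[X])) := by
            rw [← comm, Matrix.mul_assoc]
        _ = Matrix.scalar m (X : ℂ[X]) := by
            rw [← Matrix.map_mul, h', hC1, mul_one]
    · simp only [RingHom.mapMatrix_apply, Matrix.map_mul]
  rw [Matrix.charpoly, Matrix.charpoly, key, Matrix.det_mul, Matrix.det_mul]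
  have hdet : (E'.map (C : ℂ →+* ℂ[X])).det * (E.map (C : ℂ →+* ℂ[X])).det = 1 := by
    rw [← Matrix.det_mul, ← Matrix.map_mul, h', hC1, Matrix.det_one]
  calc (E'.map (C : ℂ →+* ℂ[X])).det * (charmatrix A).det * (E.map (C : ℂ →+* ℂ[X])).det
      = (E'.map (C : ℂ →+* ℂ[X])).det * (E.map (C : ℂ →+* ℂ[X])).det * (charmatrix A).det := by
        ring
    _ = (charmatrix A).det := by rw [hdet, one_mul]

private lemma charpoly_diagonal (d : m → ℂ) :
    (Matrix.diagonal d).charpoly = ∏ i, (X - C (d i)) := by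
  have hcm : charmatrix (Matrix.diagonal d) = Matrix.diagonal (fun i => X - C (d i)) := by
    ext i j
    by_cases hij : i = j
    · subst hij; simp [charmatrix_apply]
    · simp [charmatrix_apply, Matrix.diagonal_apply_ne _ hij]
  rw [Matrix.charpoly, hcm, Matrix.det_diagonal]

private lemma charpoly_zero' :
    (0 : Matrix m m ℂ).charpoly = X ^ (Fintype.card m) := by
  have := _root_.charpoly_diagonal (fun _ : m => (0:ℂ))
  simpa [Matrix.diagonal_zero, Finset.prod_const, Finset.card_univ] using this

private lemma charpoly_hermitian (A : Matrix m m ℂ) (hA : A.IsHermitian) :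
    A.charpoly = ∏ i, (X - C ((hA.eigenvalues i : ℝ) : ℂ)) := by
  have hU : (hA.eigenvectorUnitary : Matrix m m ℂ) *
      (star (hA.eigenvectorUnitary : Matrix m m ℂ)) = 1 :=
    (Matrix.mem_unitaryGroup_iff).mp (hA.eigenvectorUnitary).2
  have hc := charpoly_conj (star (hA.eigenvectorUnitary : Matrix m m ℂ))
    (hA.eigenvectorUnitary : Matrix m m ℂ)
    (Matrix.diagonal (RCLike.ofReal ∘ hA.eigenvalues))
    (mul_eq_one_comm.mp hU)
  calc A.charpoly
      = ((hA.eigenvectorUnitary : Matrix m m ℂ) *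
          Matrix.diagonal (RCLike.ofReal ∘ hA.eigenvalues) *
          (star (hA.eigenvectorUnitary : Matrix m m ℂ))).charpoly := by
        conv_lhs => rw [hA.spectral_theorem, Unitary.conjStarAlgAut_apply]
    _ = (Matrix.diagonal (RCLike.ofReal ∘ hA.eigenvalues)).charpoly := hc
    _ = ∏ i, (X - C ((hA.eigenvalues i : ℝ) : ℂ)) := by
        rw [_root_.charpoly_diagonal]
        exact Finset.prod_congr rfl fun i _ => rfl

private lemma charpoly_mul_comm' (A B : Matrix m m ℂ) :
    (A * B).charpoly = (B * A).charpoly := by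
  set E : Matrix (m ⊕ m) (m ⊕ m) ℂ :=
    Matrix.fromBlocks (1 : Matrix m m ℂ) A (0 : Matrix m m ℂ) (1 : Matrix m m ℂ) with hE
  set E' : Matrix (m ⊕ m) (m ⊕ m) ℂ :=
    Matrix.fromBlocks (1 : Matrix m m ℂ) (-A) (0 : Matrix m m ℂ) (1 : Matrix m m ℂ) with hE'
  set M1 : Matrix (m ⊕ m) (m ⊕ m) ℂ :=
    Matrix.fromBlocks (A * B) (0 : Matrix m m ℂ) B (0 : Matrix m m ℂ) with hM1
  have hEE' : E * E' = 1 := by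
    rw [hE, hE', Matrix.fromBlocks_multiply]
    simpa using Matrix.fromBlocks_one
  have hsim : E' * M1 * E =
      Matrix.fromBlocks (0 : Matrix m m ℂ) (0 : Matrix m m ℂ) B (B * A) := by
    rw [hE, hE', hM1, Matrix.fromBlocks_multiply, Matrix.fromBlocks_multiply]
    congr 1 <;> simp [Matrix.neg_mul, Matrix.mul_assoc]
  have h1 := charpoly_conj E E' M1 hEE'
  rw [hsim, Matrix.charpoly_fromBlocks_zero₁₂, Matrix.charpoly_fromBlocks_zero₁₂,
    charpoly_zero'] at h1
  -- h1 : X ^ card * (B*A).charpoly = (A*B).charpoly * X ^ card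
  rw [mul_comm] at h1
  exact (mul_right_cancel₀ (pow_ne_zero _ Polynomial.X_ne_zero) h1).symm

private lemma sum_multiset_rpow {ι : Type*} [Fintype ι] (e : ι → ℝ) (α : ℝ) :
    ∑ i, e i ^ α = ((Finset.univ.val.map fun i => ((e i : ℝ) : ℂ)).map
      fun z : ℂ => z.re ^ α).sum := by
  rw [Multiset.map_map, Finset.sum_eq_multiset_sum]
  exact congrArg Multiset.sum (Multiset.map_congr rfl fun i _ => by simp)

private lemma sum_eig_pad {k k' : Type*} [Fintype k] [DecidableEq k] [Fintype k'] [DecidableEq k']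
    {T : Matrix k k ℂ} {R : Matrix k' k' ℂ} (hT : T.IsHermitian) (hR : R.IsHermitian)
    {N : ℕ} (h : T.charpoly = R.charpoly * X ^ N)
    {α : ℝ} (hα : 0 < α) :
    ∑ i, hT.eigenvalues i ^ α = ∑ j, hR.eigenvalues j ^ α := by
  set ST : Multiset ℂ := Finset.univ.val.map (fun i => ((hT.eigenvalues i : ℝ) : ℂ)) with hST
  set SR : Multiset ℂ := Finset.univ.val.map (fun j => ((hR.eigenvalues j : ℝ) : ℂ)) with hSR
  have hprodT : (ST.map fun a => X - C a).prod = T.charpoly := by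
    rw [charpoly_hermitian T hT, Finset.prod_eq_multiset_prod, hST, Multiset.map_map]
    rfl
  have hprodR : (SR.map fun a => X - C a).prod = R.charpoly := by
    rw [charpoly_hermitian R hR, Finset.prod_eq_multiset_prod, hSR, Multiset.map_map]
    rfl
  have key : ST = SR + Multiset.replicate N 0 := by
    have hpq : (ST.map fun a => X - C a).prod =
        ((SR + Multiset.replicate N 0).map fun a => X - C a).prod := by
      rw [Multiset.map_add, Multiset.prod_add, Multiset.map_replicate, Multiset.prod_replicate,
        hprodT, hprodR, map_zero, sub_zero, h]
    calc ST = (ST.map fun a => X - C a).prod.roots :=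
          (Polynomial.roots_multiset_prod_X_sub_C ST).symm
      _ = ((SR + Multiset.replicate N 0).map fun a => X - C a).prod.roots := by rw [hpq]
      _ = SR + Multiset.replicate N 0 := Polynomial.roots_multiset_prod_X_sub_C _
  calc ∑ i, hT.eigenvalues i ^ α
      = ((ST.map fun z : ℂ => z.re ^ α)).sum := by rw [hST]; exact sum_multiset_rpow hT.eigenvalues α
    _ = (((SR + Multiset.replicate N 0).map fun z : ℂ => z.re ^ α)).sum := by rw [key]
    _ = ((SR.map fun z : ℂ => z.re ^ α)).sum := by
        rw [Multiset.map_add, Multiset.sum_add, Multiset.map_replicate, Multiset.sum_replicate,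
          Complex.zero_re, Real.zero_rpow hα.ne', smul_zero, add_zero]
    _ = ∑ j, hR.eigenvalues j ^ α := by rw [hSR]; exact (sum_multiset_rpow hR.eigenvalues α).symm

private lemma conj_diag_apply (S : Matrix m m ℂ) (d : m → ℂ) (i : m) :
    (Sᴴ * (Matrix.diagonal d * S)) i i = ∑ j, d j * (Complex.normSq (S j i) : ℂ) := by
  rw [Matrix.mul_apply]
  refine Finset.sum_congr rfl fun j _ => ?_
  rw [Matrix.diagonal_mul, Matrix.conjTranspose_apply]
  have hz : star (S j i) * S j i = (Complex.normSq (S j i) : ℂ) := by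
    rw [Complex.star_def, mul_comm, Complex.mul_conj]
  calc star (S j i) * (d j * S j i) = d j * (star (S j i) * S j i) := by ring
    _ = d j * (Complex.normSq (S j i) : ℂ) := by rw [hz]

/-- Peierls-type inequality for the concave function `t ^ α`. -/
private lemma peierls (T : Matrix m m ℂ) (hT : T.PosSemidef) (V : Matrix m m ℂ)
    (hV : Vᴴ * V = 1) {α : ℝ} (h0 : 0 < α) (h1 : α ≤ 1) :
    (mpow T α).trace.re ≤ ∑ i, ((Vᴴ * T * V) i i).re ^ α := by
  have hTH : T.IsHermitian := hT.1
  set U : Matrix m m ℂ := (hTH.eigenvectorUnitary : Matrix m m ℂ) with hUdef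
  have hUU : U * star U = 1 := (Matrix.mem_unitaryGroup_iff).mp (hTH.eigenvectorUnitary).2
  set S : Matrix m m ℂ := star U * V with hSdef
  have hSH : Sᴴ = Vᴴ * U := by
    rw [hSdef, Matrix.conjTranspose_mul, Matrix.star_eq_conjTranspose,
      Matrix.conjTranspose_conjTranspose]
  have hS1 : Sᴴ * S = 1 := by
    rw [hSH, hSdef, Matrix.mul_assoc, ← Matrix.mul_assoc U, hUU, Matrix.one_mul, hV]
  have hconj : ∀ d : m → ℂ, Vᴴ * (U * Matrix.diagonal d * star U) * V =
      Sᴴ * (Matrix.diagonal d * S) := by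
    intro d
    rw [hSH, hSdef]
    simp only [Matrix.mul_assoc]
  -- weights
  have hwsum : ∀ i, ∑ j, Complex.normSq (S j i) = 1 := by
    intro i
    have h1' : (Sᴴ * (Matrix.diagonal (fun _ : m => (1:ℂ)) * S)) i i = 1 := by
      rw [Matrix.diagonal_one, Matrix.one_mul, hS1, Matrix.one_apply_eq]
    rw [conj_diag_apply] at h1'
    have := congrArg Complex.re h1'
    simpa [Complex.re_sum] using this
  -- trace rewriting
  have htr : (mpow T α).trace = (Vᴴ * (mpow T α) * V).trace := by
    rw [Matrix.trace_mul_cycle, mul_eq_one_comm.mp hV, Matrix.one_mul]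
  have hmp : mpow T α = U * Matrix.diagonal (fun i => ((hTH.eigenvalues i ^ α : ℝ) : ℂ)) * star U := by
    rw [mpow, dif_pos hTH]
  have hTform : Vᴴ * T * V =
      Sᴴ * (Matrix.diagonal (RCLike.ofReal ∘ hTH.eigenvalues) * S) := by
    conv_lhs => rw [hTH.spectral_theorem]
    exact hconj _
  have hlhs : (mpow T α).trace.re =
      ∑ i, ∑ j, hTH.eigenvalues j ^ α * Complex.normSq (S j i) := by
    rw [htr, hmp, hconj, Matrix.trace]
    rw [Complex.re_sum]
    refine Finset.sum_congr rfl fun i _ => ?_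
    rw [Matrix.diag_apply, conj_diag_apply, Complex.re_sum]
    refine Finset.sum_congr rfl fun j _ => ?_
    rw [← Complex.ofReal_mul, Complex.ofReal_re]
  rw [hlhs]
  refine Finset.sum_le_sum fun i _ => ?_
  have hentry : ((Vᴴ * T * V) i i).re = ∑ j, hTH.eigenvalues j * Complex.normSq (S j i) := by
    rw [hTform, conj_diag_apply, Complex.re_sum]
    refine Finset.sum_congr rfl fun j _ => ?_
    have : (RCLike.ofReal ∘ hTH.eigenvalues) j = ((hTH.eigenvalues j : ℝ) : ℂ) := rfl
    rw [this, ← Complex.ofReal_mul, Complex.ofReal_re]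
  rw [hentry]
  have hj := jensen_rpow (fun j => Complex.normSq (S j i)) (fun j => hTH.eigenvalues j)
    (fun j => Complex.normSq_nonneg _) (hwsum i) (fun j => hT.eigenvalues_nonneg j) h0 h1
  calc ∑ j, hTH.eigenvalues j ^ α * Complex.normSq (S j i)
      = ∑ j, Complex.normSq (S j i) * hTH.eigenvalues j ^ α := by
        refine Finset.sum_congr rfl fun j _ => mul_comm _ _
    _ ≤ (∑ j, Complex.normSq (S j i) * hTH.eigenvalues j) ^ α := hj
    _ = (∑ j, hTH.eigenvalues j * Complex.normSq (S j i)) ^ α := by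
        congr 1
        exact Finset.sum_congr rfl fun j _ => mul_comm _ _

private lemma mpow_zero_trace (A : Matrix m m ℂ) (hA : A.IsHermitian) :
    (mpow A 0).trace.re = Fintype.card m := by
  rw [mpow_trace_re hA]
  simp [Real.rpow_zero, Finset.card_univ]

end McCarthyAux

/-- McCarthy's inequality: trace subadditivity of the α-power for α ∈ [0,1]. -/
theorem mccarthy_trace_subadditive {n : Type*} [Fintype n] [DecidableEq n]
    (P Q : Matrix n n ℂ) (hP : P.PosSemidef) (hQ : Q.PosSemidef)
    (α : ℝ) (hα : α ∈ Set.Icc (0:ℝ) 1) :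
    (mpow (P + Q) α).trace.re ≤ (mpow P α).trace.re + (mpow Q α).trace.re := by
  obtain ⟨hα0, hα1⟩ := hα
  rcases eq_or_lt_of_le hα0 with h0 | h0
  · -- α = 0
    rw [← h0, mpow_zero_trace _ (hP.add hQ).1, mpow_zero_trace _ hP.1, mpow_zero_trace _ hQ.1]
    have : (0:ℝ) ≤ Fintype.card n := by positivity
    linarith
  · -- 0 < α
    have hR : (P + Q).PosSemidef := hP.add hQ
    open scoped MatrixOrder in
    set sP := CFC.sqrt P with hsP
    open scoped MatrixOrder in
    set sQ := CFC.sqrt Q with hsQ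
    have hsPH : sPᴴ = sP := by open scoped MatrixOrder in exact (CFC.sqrt_nonneg P).posSemidef.1
    have hsQH : sQᴴ = sQ := by open scoped MatrixOrder in exact (CFC.sqrt_nonneg Q).posSemidef.1
    have hsP2 : sP * sP = P := by open scoped MatrixOrder in exact CFC.sqrt_mul_sqrt_self P hP.nonneg
    have hsQ2 : sQ * sQ = Q := by open scoped MatrixOrder in exact CFC.sqrt_mul_sqrt_self Q hQ.nonneg
    set M : Matrix (n ⊕ n) (n ⊕ n) ℂ := Matrix.fromBlocks sP 0 sQ 0 with hM
    set T : Matrix (n ⊕ n) (n ⊕ n) ℂ := M * Mᴴ with hT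
    have hTpsd : T.PosSemidef := Matrix.posSemidef_self_mul_conjTranspose M
    have hMH : Mᴴ = Matrix.fromBlocks sP sQ 0 0 := by
      rw [hM, Matrix.fromBlocks_conjTranspose, hsPH, hsQH]
      simp
    have hMHM : Mᴴ * M = Matrix.fromBlocks (P + Q) 0 0 0 := by
      rw [hMH, hM, Matrix.fromBlocks_multiply]
      simp [hsP2, hsQ2]
    have hcp : T.charpoly = (P + Q).charpoly * Polynomial.X ^ Fintype.card n := by
      rw [hT, _root_.charpoly_mul_comm' M Mᴴ, hMHM, Matrix.charpoly_fromBlocks_zero₁₂, charpoly_zero']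
    have hsum : ∑ i, hTpsd.1.eigenvalues i ^ α = ∑ j, hR.1.eigenvalues j ^ α :=
      sum_eig_pad hTpsd.1 hR.1 hcp h0
    -- the unitary V
    set UP : Matrix n n ℂ := (hP.1.eigenvectorUnitary : Matrix n n ℂ) with hUP
    set UQ : Matrix n n ℂ := (hQ.1.eigenvectorUnitary : Matrix n n ℂ) with hUQ
    set V : Matrix (n ⊕ n) (n ⊕ n) ℂ := Matrix.fromBlocks UP 0 0 UQ with hV
    have hVH : Vᴴ = Matrix.fromBlocks UPᴴ 0 0 UQᴴ := by
      rw [hV, Matrix.fromBlocks_conjTranspose]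
      simp
    have hVunit : Vᴴ * V = 1 := by
      rw [hVH, hV, Matrix.fromBlocks_multiply]
      have h1 : UPᴴ * UP = 1 := by
        rw [← Matrix.star_eq_conjTranspose]
        exact (Matrix.mem_unitaryGroup_iff').mp (hP.1.eigenvectorUnitary).2
      have h2 : UQᴴ * UQ = 1 := by
        rw [← Matrix.star_eq_conjTranspose]
        exact (Matrix.mem_unitaryGroup_iff').mp (hQ.1.eigenvectorUnitary).2
      simp [h1, h2, Matrix.fromBlocks_one]
    have hTblocks : T = Matrix.fromBlocks P (sP * sQ) (sQ * sP) Q := by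
      rw [hT, hM, hMH, Matrix.fromBlocks_multiply]
      simp [hsP2, hsQ2]
    have hdiagP : UPᴴ * P * UP = Matrix.diagonal (RCLike.ofReal ∘ hP.1.eigenvalues) := by
      rw [← Matrix.star_eq_conjTranspose]
      have := hP.1.conjStarAlgAut_star_eigenvectorUnitary
      rw [Unitary.conjStarAlgAut_star_apply] at this
      exact this
    have hdiagQ : UQᴴ * Q * UQ = Matrix.diagonal (RCLike.ofReal ∘ hQ.1.eigenvalues) := by
      rw [← Matrix.star_eq_conjTranspose]
      have := hQ.1.conjStarAlgAut_star_eigenvectorUnitary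
      rw [Unitary.conjStarAlgAut_star_apply] at this
      exact this
    have hVTV : ∀ i, ((Vᴴ * T * V) (Sum.inl i) (Sum.inl i)) = ((hP.1.eigenvalues i : ℝ) : ℂ) ∧
        ((Vᴴ * T * V) (Sum.inr i) (Sum.inr i)) = ((hQ.1.eigenvalues i : ℝ) : ℂ) := by
      have : Vᴴ * T * V = Matrix.fromBlocks (UPᴴ * P * UP) (UPᴴ * (sP * sQ) * UQ)
          (UQᴴ * (sQ * sP) * UP) (UQᴴ * Q * UQ) := by
        rw [hTblocks, hVH, hV, Matrix.fromBlocks_multiply, Matrix.fromBlocks_multiply]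
        simp [Matrix.mul_assoc]
      intro i
      constructor
      · rw [this, hdiagP]
        simp [Matrix.fromBlocks]
      · rw [this, hdiagQ]
        simp [Matrix.fromBlocks]
    have hpei := peierls T hTpsd V hVunit h0 hα1
    have hrhs : ∑ i, ((Vᴴ * T * V) i i).re ^ α =
        (∑ i, hP.1.eigenvalues i ^ α) + ∑ i, hQ.1.eigenvalues i ^ α := by
      rw [Fintype.sum_sum_type]
      congr 1
      · exact Finset.sum_congr rfl fun i _ => by rw [(hVTV i).1, Complex.ofReal_re]
      · exact Finset.sum_congr rfl fun i _ => by rw [(hVTV i).2, Complex.ofReal_re]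
    calc (mpow (P + Q) α).trace.re = ∑ j, hR.1.eigenvalues j ^ α := mpow_trace_re hR.1 α
      _ = ∑ i, hTpsd.1.eigenvalues i ^ α := hsum.symm
      _ = (mpow T α).trace.re := (mpow_trace_re hTpsd.1 α).symm
      _ ≤ ∑ i, ((Vᴴ * T * V) i i).re ^ α := hpei
      _ = (∑ i, hP.1.eigenvalues i ^ α) + ∑ i, hQ.1.eigenvalues i ^ α := hrhs
      _ = (mpow P α).trace.re + (mpow Q α).trace.re := by
          rw [mpow_trace_re hP.1 α, mpow_trace_re hQ.1 α]
end

section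
/- In the limit α → 1⁻, the continuity bound log(1+ε) + (1/(1-α)) log(1 + ε^α d_A^{2(1-α)} - ε/(1+ε)^{1-α}) converges to 2ε log(d_A) + (1+ε)log(1+ε) - ε log(ε). -/
private lemma slope_aux (L X α : ℝ) (hL : L ≠ 0) (h : α ≠ 1) :
    -(1/L) * ((X - 0)/(α-1)) = (1/(1-α)) * (X/L) := by
  have h1 : α - 1 ≠ 0 := sub_ne_zero.mpr h
  have h2 : 1 - α ≠ 0 := sub_ne_zero.mpr (Ne.symm h)
  field_simp
  ring

/-- As `α → 1⁻`, the Marwah–Dupuis continuity bound converges to Winter's tight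
AFW bound `2ε log d + (1+ε)log(1+ε) - ε log ε`. -/
theorem continuity_bound_limit (ε d : ℝ) (hε : ε ∈ Set.Ioc (0:ℝ) 1) (hd : 1 ≤ d) :
    Filter.Tendsto
      (fun α : ℝ => Real.logb 2 (1 + ε) +
        (1/(1-α)) * Real.logb 2 (1 + ε ^ α * d ^ (2*(1-α)) - ε / (1+ε) ^ (1-α)))
      (nhdsWithin 1 (Set.Iio 1))
      (nhds (2*ε*Real.logb 2 d + (1+ε)*Real.logb 2 (1+ε) - ε * Real.logb 2 ε)) := by
  obtain ⟨hε0, hε1⟩ := hε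
  have hd0 : (0:ℝ) < d := lt_of_lt_of_le one_pos hd
  have h1ε : (0:ℝ) < 1 + ε := by linarith
  set g : ℝ → ℝ := fun α => 1 + ε ^ α * d ^ (2*(1-α)) - ε / (1+ε) ^ (1-α) with hgdef
  have hg1 : g 1 = 1 := by
    simp [hgdef, Real.rpow_one]
  -- derivative of g at 1
  have h1 : HasDerivAt (fun α : ℝ => ε ^ α) (ε * Real.log ε) 1 := by
    simpa using (Real.hasStrictDerivAt_const_rpow hε0 1).hasDerivAt
  have hlin : HasDerivAt (fun α : ℝ => 2*(1-α)) (-2) 1 := by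
    simpa using ((hasDerivAt_id (1:ℝ)).const_sub 1).const_mul 2
  have h2 : HasDerivAt (fun α : ℝ => d ^ (2*(1-α))) (-2 * Real.log d) 1 := by
    have := ((Real.hasStrictDerivAt_const_rpow hd0 (2*(1-(1:ℝ)))).hasDerivAt).comp 1 hlin
    simpa [mul_comm, Function.comp_def] using this
  have hlin2 : HasDerivAt (fun α : ℝ => 1-α) (-1) 1 := by
    simpa using ((hasDerivAt_id (1:ℝ)).const_sub 1)
  have h3den : HasDerivAt (fun α : ℝ => (1+ε) ^ (1-α)) (-Real.log (1+ε)) 1 := by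
    have := ((Real.hasStrictDerivAt_const_rpow h1ε (1-(1:ℝ))).hasDerivAt).comp 1 hlin2
    simpa [Function.comp_def] using this
  have h3 : HasDerivAt (fun α : ℝ => ε / (1+ε) ^ (1-α)) (ε * Real.log (1+ε)) 1 := by
    have hden : ((1+ε) : ℝ) ^ ((1:ℝ)-1) ≠ 0 := by positivity
    have := (hasDerivAt_const (1:ℝ) ε).div h3den hden
    convert this using 1
    all_goals try rfl
    simp
  have hg : HasDerivAt g (ε * Real.log ε - 2*ε*Real.log d - ε * Real.log (1+ε)) 1 := by
    have hprod := h1.mul h2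
    have := (hprod.const_add 1).sub h3
    convert this using 1
    all_goals try rfl
    simp [Real.rpow_one]
    ring
  have hG : HasDerivAt (fun α => Real.log (g α))
      (ε * Real.log ε - 2*ε*Real.log d - ε * Real.log (1+ε)) 1 := by
    have := hg.log (by rw [hg1]; norm_num)
    simpa [hg1] using this
  have hslope := hasDerivAt_iff_tendsto_slope.mp hG
  have hmono : nhdsWithin (1:ℝ) (Set.Iio 1) ≤ nhdsWithin 1 {(1:ℝ)}ᶜ :=
    nhdsWithin_mono 1 (fun x hx => ne_of_lt hx)
  have hslope' := hslope.mono_left hmono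
  have hlog2 : Real.log 2 ≠ 0 := by
    have := Real.log_pos (by norm_num : (1:ℝ) < 2); linarith
  -- target function equals const + (-(1/log 2)) * slope
  have key : Filter.Tendsto
      (fun α : ℝ => Real.logb 2 (1+ε) + (-(1/Real.log 2)) * slope (fun α => Real.log (g α)) 1 α)
      (nhdsWithin 1 (Set.Iio 1))
      (nhds (Real.logb 2 (1+ε) + (-(1/Real.log 2)) *
        (ε * Real.log ε - 2*ε*Real.log d - ε * Real.log (1+ε)))) :=
    (tendsto_const_nhds.add (hslope'.const_mul _))
  have heq : ∀ α ∈ Set.Iio (1:ℝ),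
      Real.logb 2 (1+ε) + (-(1/Real.log 2)) * slope (fun α => Real.log (g α)) 1 α
      = Real.logb 2 (1 + ε) + (1/(1-α)) * Real.logb 2 (g α) := by
    intro α hα
    have hne : α ≠ 1 := ne_of_lt hα
    rw [slope_def_field, hg1, Real.log_one, slope_aux _ _ _ hlog2 hne]
    simp [Real.logb]
  have hAB : Real.logb 2 (1+ε) + (-(1/Real.log 2)) *
      (ε * Real.log ε - 2*ε*Real.log d - ε * Real.log (1+ε))
      = 2*ε*Real.logb 2 d + (1+ε)*Real.logb 2 (1+ε) - ε * Real.logb 2 ε := by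
    simp only [Real.logb]
    field_simp
    ring
  rw [← hAB]
  exact key.congr' (Filter.eventuallyEq_of_mem self_mem_nhdsWithin heq)
end
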